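/- Let $Q$ be an involutory quandle, $a,b,c \in Q$ with $c \rhd a = c \rhd b$. Then for every $i \geq 0$: $c^{(ac)^i a} = c^{(ac)^i b}$ (relation $\gamma_i$). -/
import Mathlib


/-- An involutory quandle: `x ▷ x = x`, `(x ▷ y) ▷ y = x`, and right self-distributivity. -/
structure InvQuandle (Q : Type*) where
  act : Q → Q → Q
  idem : ∀ x, act x x = x
  invol : ∀ x y, act (act x y) y = x
  distrib : ∀ x y z, act (act x y) z = act (act x z) (act y z)

namespace InvQuandle

variable {Q : Type*}

/-- Apply a word (list of quandle elements) to `z` on the right: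
`apw R z [y₁,…,y_k] = ((z ▷ y₁) ▷ y₂) ⋯ ▷ y_k`. -/
def apw (R : InvQuandle Q) (z : Q) (w : List Q) : Q := w.foldl R.act z

/-- The word `w` repeated `n` times. -/
def wpow (w : List Q) : ℕ → List Q
  | 0 => []
  | n + 1 => w ++ wpow w n

end InvQuandle

open InvQuandle

lemma wpow_succ' {Q : Type*} (w : List Q) (n : ℕ) : wpow w (n+1) = wpow w n ++ w := by
  induction n with
  | zero => simp [wpow]
  | succ n ih =>
    calc wpow w (n+2) = w ++ wpow w (n+1) := rfl
      _ = w ++ (wpow w n ++ w) := by rw [ih]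
      _ = (w ++ wpow w n) ++ w := by rw [List.append_assoc]
      _ = wpow w (n+1) ++ w := rfl

/-- relation $γ_i$: if $c ▷ a = c ▷ b$ then
$c^{(ac)^i a} = c^{(ac)^i b}$ for all $i ≥ 0$. -/
theorem stmt14 {Q : Type*} (R : InvQuandle Q) (a b c : Q)
    (h : R.act c a = R.act c b) (i : ℕ) :
    R.apw c (wpow [a, c] i ++ [a]) = R.apw c (wpow [a, c] i ++ [b]) := by
  induction i with
  | zero => simpa [apw, wpow] using h
  | succ i ih =>
    rw [wpow_succ']
    simp only [apw, List.foldl_append, List.foldl_cons, List.foldl_nil] at ih ⊢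
    rw [R.distrib, R.invol, ih, R.distrib, R.invol, ← h]
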